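/- Let 0 → M' → M → M'' → 0 be a short exact sequence of sheaves of abelian groups on a topological space X, with M' flabby (in the traditional sense: all restrictions M'(X) → M'(U) are surjective). Assuming Zorn's lemma, the induced sequence of global sections 0 → M'(X) → M(X) → M''(X) → 0 is exact. -/

import Mathlib

open TopologicalSpace CategoryTheory Opposite

theorem StmtAux.natApp {X : TopCat.{u}} {F G : TopCat.Presheaf AddCommGrpCat.{u} X} (f : F ⟶ G)
    {U V : Opens X} (h : U ⟶ V) (s : F.obj (op V)) :
    f.app (op U) (F.map h.op s) = G.map h.op (f.app (op V) s) := by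
  rw [← comp_apply, f.naturality, comp_apply]

theorem StmtAux.resRes {X : TopCat.{u}} (F : TopCat.Presheaf AddCommGrpCat.{u} X)
    {A B C : Opens X} (f : A ⟶ B) (g : B ⟶ C) (h : A ⟶ C) (s : F.obj (op C)) :
    F.map f.op (F.map g.op s) = F.map h.op s := by
  rw [← comp_apply, ← Functor.map_comp]
  congr 1

theorem StmtAux.resCongr {X : TopCat.{u}} (F : TopCat.Presheaf AddCommGrpCat.{u} X)
    {A B : Opens X} (f g : A ⟶ B) (s : F.obj (op B)) :
    F.map f.op s = F.map g.op s := by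
  rw [Subsingleton.elim f g]

namespace StmtAux
variable {X : TopCat.{u}} {M' M M'' : TopCat.Sheaf AddCommGrpCat.{u} X}
    (i : M' ⟶ M) (p : M ⟶ M'')

theorem piZero
    (hstalk_exact : ∀ (x : X)
      (m : (TopCat.Presheaf.stalkFunctor AddCommGrpCat.{u} x).obj M.obj),
      ((TopCat.Presheaf.stalkFunctor AddCommGrpCat.{u} x).map p.hom) m = 0 ↔
        ∃ m', ((TopCat.Presheaf.stalkFunctor AddCommGrpCat.{u} x).map i.hom) m' = m)
    (U : Opens X) (s : M'.obj.obj (op U)) :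
    p.hom.app (op U) (i.hom.app (op U) s) = 0 := by
  apply TopCat.Presheaf.section_ext M'' U
  intro x hx
  show M''.presheaf.germ U x hx _ = M''.presheaf.germ U x hx 0
  rw [map_zero]
  rw [← TopCat.Presheaf.stalkFunctor_map_germ_apply U x hx p.hom]
  rw [← TopCat.Presheaf.stalkFunctor_map_germ_apply U x hx i.hom]
  exact (hstalk_exact x _).mpr ⟨_, rfl⟩

theorem iInj
    (hstalk_i : ∀ x : X,
      Function.Injective ((TopCat.Presheaf.stalkFunctor AddCommGrpCat.{u} x).map i.hom))
    (U : Opens X) : Function.Injective (i.hom.app (op U)) :=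
  TopCat.Presheaf.app_injective_of_stalkFunctor_map_injective i.hom U fun x _ => hstalk_i x

theorem exactOn
    (hstalk_i : ∀ x : X,
      Function.Injective ((TopCat.Presheaf.stalkFunctor AddCommGrpCat.{u} x).map i.hom))
    (hstalk_exact : ∀ (x : X)
      (m : (TopCat.Presheaf.stalkFunctor AddCommGrpCat.{u} x).obj M.obj),
      ((TopCat.Presheaf.stalkFunctor AddCommGrpCat.{u} x).map p.hom) m = 0 ↔
        ∃ m', ((TopCat.Presheaf.stalkFunctor AddCommGrpCat.{u} x).map i.hom) m' = m)
    (U : Opens X) (m : M.obj.obj (op U)) (hm : p.hom.app (op U) m = 0) :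
    ∃ m', i.hom.app (op U) m' = m := by
  have key : ∀ x : U, ∃ (V : Opens X) (hxV : (x : X) ∈ V) (hVU : V ⟶ U)
      (s : M'.obj.obj (op V)), i.hom.app (op V) s = M.obj.map hVU.op m := by
    intro x
    have h1 : ((TopCat.Presheaf.stalkFunctor AddCommGrpCat.{u} x.1).map p.hom)
        (M.presheaf.germ U x.1 x.2 m) = 0 := by
      rw [TopCat.Presheaf.stalkFunctor_map_germ_apply, hm]
      show M''.presheaf.germ U x.1 x.2 0 = 0
      exact map_zero _
    obtain ⟨mx, hmx⟩ := (hstalk_exact x.1 _).mp h1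
    obtain ⟨V₁, hxV₁, s₁, hs₁⟩ := M'.presheaf.germ_exist (x := x.1) mx
    rw [← hs₁, TopCat.Presheaf.stalkFunctor_map_germ_apply] at hmx
    obtain ⟨W, hxW, iWV₁, iWU, heq⟩ := M.presheaf.germ_eq x.1 hxV₁ x.2 _ _ hmx
    exact ⟨W, hxW, iWU, M'.obj.map iWV₁.op s₁, by rw [natApp, heq]⟩
  choose V hxV hVU s hs using key
  have hcover : U ≤ iSup V := fun y hy => by
    simp only [Opens.mem_iSup]
    exact ⟨⟨y, hy⟩, hxV ⟨y, hy⟩⟩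
  have hcompat : TopCat.Presheaf.IsCompatible M'.obj V s := by
    intro a b
    apply iInj i hstalk_i
    rw [natApp, natApp, hs, hs, ← comp_apply, ← comp_apply, ← Functor.map_comp,
      ← Functor.map_comp]
    congr 1
  obtain ⟨m', hm', -⟩ := M'.existsUnique_gluing' V U hVU hcover s hcompat
  refine ⟨m', ?_⟩
  apply TopCat.Sheaf.eq_of_locally_eq' M V U hVU hcover
  intro a
  rw [← natApp, hm', hs]

end StmtAux

open StmtAux in
set_option maxHeartbeats 2000000 in
theorem stmt17 {X : TopCat.{u}} (M' M M'' : TopCat.Sheaf AddCommGrpCat.{u} X)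
    (i : M' ⟶ M) (p : M ⟶ M'')
    (hstalk_i : ∀ x : X,
      Function.Injective ((TopCat.Presheaf.stalkFunctor AddCommGrpCat.{u} x).map i.hom))
    (hstalk_p : ∀ x : X,
      Function.Surjective ((TopCat.Presheaf.stalkFunctor AddCommGrpCat.{u} x).map p.hom))
    (hstalk_exact : ∀ (x : X)
      (m : (TopCat.Presheaf.stalkFunctor AddCommGrpCat.{u} x).obj M.obj),
      ((TopCat.Presheaf.stalkFunctor AddCommGrpCat.{u} x).map p.hom) m = 0 ↔
        ∃ m', ((TopCat.Presheaf.stalkFunctor AddCommGrpCat.{u} x).map i.hom) m' = m)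
    (hflabby : ∀ U : Opens X, Function.Surjective
      (M'.obj.map (homOfLE (le_top : U ≤ ⊤)).op)) :
    Function.Injective (i.hom.app (op ⊤)) ∧
    (∀ m : M.obj.obj (op ⊤),
      (p.hom.app (op ⊤)) m = 0 ↔ ∃ m', (i.hom.app (op ⊤)) m' = m) ∧
    Function.Surjective (p.hom.app (op ⊤)) := by
  refine ⟨iInj i hstalk_i ⊤, fun m => ⟨exactOn i p hstalk_i hstalk_exact ⊤ m,
    fun ⟨m', hm'⟩ => hm' ▸ piZero i p hstalk_exact ⊤ m'⟩, ?_⟩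
  -- surjectivity via Zorn
  intro m''
  classical
  let P := {q : Σ U : Opens X, M.obj.obj (op U) //
    p.hom.app (op q.1) q.2 = M''.obj.map (homOfLE (le_top : q.1 ≤ ⊤)).op m''}
  letI : Preorder P :=
    { le := fun a b => ∃ h : a.1.1 ≤ b.1.1, M.obj.map (homOfLE h).op b.1.2 = a.1.2
      le_refl := fun a => ⟨le_refl _, by
        rw [show (homOfLE (le_refl a.1.1)).op = 𝟙 (op a.1.1) from rfl, M.obj.map_id]
        rfl⟩
      le_trans := fun a b c hab hbc => by
        obtain ⟨h1, e1⟩ := hab; obtain ⟨h2, e2⟩ := hbc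
        exact ⟨h1.trans h2, by rw [← e1, ← e2, resRes M.obj (homOfLE h1) (homOfLE h2)]⟩ }
  have hbdd : ∀ c : Set P, IsChain (· ≤ ·) c → BddAbove c := by
    intro c hc
    have hcompat : TopCat.Presheaf.IsCompatible M.obj (fun q : c => q.1.1.1)
        (fun q => q.1.1.2) := by
      intro a b
      beta_reduce
      rcases hc.total a.2 b.2 with ⟨hle, he⟩ | ⟨hle, he⟩
      · rw [← he]; exact resRes M.obj _ _ _ _
      · rw [← he]; exact (resRes M.obj _ _ _ _).symm
    obtain ⟨g, hg, -⟩ := M.existsUnique_gluing (fun q : c => q.1.1.1)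
      (fun q => q.1.1.2) hcompat
    have hpg : p.hom.app (op (iSup fun q : c => q.1.1.1)) g =
        M''.obj.map (homOfLE (le_top : (iSup fun q : c => q.1.1.1) ≤ ⊤)).op m'' := by
      apply TopCat.Sheaf.eq_of_locally_eq M'' (fun q : c => q.1.1.1)
      intro a
      rw [← natApp, hg a, a.1.2, resRes M''.obj _ _ (homOfLE le_top)]
    refine ⟨⟨⟨_, g⟩, hpg⟩, fun q hq =>
      ⟨le_iSup (fun q : c => q.1.1.1) ⟨q, hq⟩, ?_⟩⟩
    rw [show homOfLE (le_iSup (fun q : c => q.1.1.1) ⟨q, hq⟩) =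
      Opens.leSupr (fun q : c => q.1.1.1) ⟨q, hq⟩ from Subsingleton.elim _ _]
    exact hg ⟨q, hq⟩
  obtain ⟨⟨⟨U, mU⟩, hmU⟩, hmax⟩ := zorn_le (α := P) hbdd
  -- the maximal element is defined on all of X
  have hU : U = ⊤ := by
    by_contra hne
    obtain ⟨x, hx⟩ : ∃ x : X, x ∉ U := by
      by_contra h
      push_neg at h
      exact hne (by ext y; simpa using h y)
    -- find a local solution near x
    obtain ⟨V, hxV, t, hpt⟩ : ∃ (V : Opens X) (_ : x ∈ V) (t : M.obj.obj (op V)),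
        p.hom.app (op V) t = M''.obj.map (homOfLE (le_top : V ≤ ⊤)).op m'' := by
      obtain ⟨t₀, ht₀⟩ := hstalk_p x (M''.presheaf.germ ⊤ x trivial m'')
      obtain ⟨V₁, hxV₁, t₁, ht₁⟩ := M.presheaf.germ_exist (x := x) t₀
      rw [← ht₁, TopCat.Presheaf.stalkFunctor_map_germ_apply] at ht₀
      obtain ⟨V, hxV, iVV₁, iVtop, heq⟩ := M''.presheaf.germ_eq x hxV₁
        (show x ∈ (⊤ : Opens X) from trivial) _ _ ht₀
      refine ⟨V, hxV, M.obj.map iVV₁.op t₁, ?_⟩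
      rw [natApp, heq]
      exact resCongr M''.obj _ _ _
    -- correct t on the overlap with U, using flabbiness of M'
    obtain ⟨t'', hpt'', hkey⟩ : ∃ t'' : M.obj.obj (op V),
        p.hom.app (op V) t'' = M''.obj.map (homOfLE (le_top : V ≤ ⊤)).op m'' ∧
        M.obj.map (Opens.infLELeft U V).op mU =
          M.obj.map (Opens.infLERight U V).op t'' := by
      have hpd : p.hom.app (op (U ⊓ V))
          (M.obj.map (Opens.infLELeft U V).op mU -
            M.obj.map (Opens.infLERight U V).op t) = 0 := by
        rw [map_sub, natApp, natApp, hmU, hpt,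
          resRes M''.obj _ _ (homOfLE (le_top : U ⊓ V ≤ ⊤)),
          resRes M''.obj _ _ (homOfLE (le_top : U ⊓ V ≤ ⊤)), sub_self]
      obtain ⟨s', hs'⟩ := exactOn i p hstalk_i hstalk_exact (U ⊓ V) _ hpd
      obtain ⟨s, hs⟩ := hflabby (U ⊓ V) s'
      refine ⟨t + i.hom.app (op V) (M'.obj.map (homOfLE (le_top : V ≤ ⊤)).op s), ?_, ?_⟩
      · rw [map_add, hpt, piZero i p hstalk_exact, add_zero]
      · rw [map_add, ← natApp, resRes M'.obj _ _ (homOfLE (le_top : U ⊓ V ≤ ⊤)),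
          hs, hs']
        abel
    have hagree : ∀ (W : Opens X) (f : W ⟶ U) (g : W ⟶ V),
        M.obj.map f.op mU = M.obj.map g.op t'' := by
      intro W f g
      calc M.obj.map f.op mU
          = M.obj.map (homOfLE (le_inf f.le g.le)).op
              (M.obj.map (Opens.infLELeft U V).op mU) :=
            (resRes M.obj _ _ _ _).symm
        _ = M.obj.map (homOfLE (le_inf f.le g.le)).op
              (M.obj.map (Opens.infLERight U V).op t'') := by rw [hkey]
        _ = M.obj.map g.op t'' := resRes M.obj _ _ _ _
    -- glue mU and t'' over U ⊔ V
    let Vb : ULift.{u} Bool → Opens X := fun b => match b with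
      | ⟨true⟩ => U
      | ⟨false⟩ => V
    let sfb : ∀ b : ULift.{u} Bool, M.obj.obj (op (Vb b)) := fun b => match b with
      | ⟨true⟩ => mU
      | ⟨false⟩ => t''
    have hcov : U ⊔ V ≤ iSup Vb :=
      sup_le (le_iSup Vb ⟨true⟩) (le_iSup Vb ⟨false⟩)
    have hcompatb : TopCat.Presheaf.IsCompatible M.obj Vb sfb := by
      rintro ⟨(_|_)⟩ ⟨(_|_)⟩
      · exact resCongr M.obj _ _ _
      · exact hagree _ (Opens.infLERight V U) (Opens.infLELeft V U) ▸
          (hagree _ (Opens.infLERight V U) (Opens.infLELeft V U)).symm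
      · exact hagree _ (Opens.infLELeft U V) (Opens.infLERight U V)
      · exact resCongr M.obj _ _ _
    let iUV : ∀ b, Vb b ⟶ U ⊔ V := fun b => match b with
      | ⟨true⟩ => homOfLE le_sup_left
      | ⟨false⟩ => homOfLE le_sup_right
    obtain ⟨n, hn, -⟩ := M.existsUnique_gluing' Vb (U ⊔ V) iUV hcov sfb hcompatb
    have hpn : p.hom.app (op (U ⊔ V)) n =
        M''.obj.map (homOfLE (le_top : U ⊔ V ≤ ⊤)).op m'' := by
      apply TopCat.Sheaf.eq_of_locally_eq' M'' Vb (U ⊔ V) iUV hcov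
      rintro ⟨(_|_)⟩
      · rw [← natApp, hn ⟨false⟩]
        show p.hom.app (op V) t'' = _
        rw [hpt'', resRes M''.obj _ _ (homOfLE (le_top : V ≤ ⊤))]
      · rw [← natApp, hn ⟨true⟩]
        show p.hom.app (op U) mU = _
        rw [hmU, resRes M''.obj _ _ (homOfLE (le_top : U ≤ ⊤))]
    have hle : (⟨⟨U, mU⟩, hmU⟩ : P) ≤ ⟨⟨U ⊔ V, n⟩, hpn⟩ := by
      refine ⟨le_sup_left, ?_⟩
      rw [show homOfLE (le_sup_left : U ≤ U ⊔ V) = iUV ⟨true⟩ from Subsingleton.elim _ _]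
      exact hn ⟨true⟩
    obtain ⟨hle', -⟩ := hmax hle
    exact hx (hle' ((le_sup_right : V ≤ U ⊔ V) hxV))
  subst hU
  refine ⟨mU, ?_⟩
  rw [hmU, show (homOfLE (le_top : (⊤ : Opens X) ≤ ⊤)).op = 𝟙 (op (⊤ : Opens X)) from rfl,
    M''.obj.map_id]
  rfl
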